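/- Let S = {x₁, …, x_k} be a multiset of natural numbers. Consider the sum-automaton A with states q₀, …, q_k where from q_{i−1} to q_i there are two transitions with weights x_i and −x_i respectively (over a one-letter input alphabet), q₀ initial, q_k final, plus a self-loop of weight 0 on q_k. Then there exists a subset I ⊆ {1,…,k} with Σ_{i∈I} x_i = Σ_{i∉I} x_i if and only if there exist two accepting runs of A assigning the same value to their (possibly different) inputs, equivalently iff some accepting run of A has value 0. -/

import Mathlib

/-- A sum-automaton: an automaton whose transitions carry integer weights. -/
structure SumAut (α Q : Type*) where
  start : Set Q
  accept : Set Q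
  step : Q → α → ℤ → Q → Prop

/-- `IsRunFrom A p ts q`: `ts` is a sequence of weighted transitions of `A`
forming a run from `p` to `q`. -/
def IsRunFrom {α Q : Type*} (A : SumAut α Q) (p : Q)
    (ts : List (Q × α × ℤ × Q)) (q : Q) : Prop :=
  (∀ t ∈ ts, A.step t.1 t.2.1 t.2.2.1 t.2.2.2) ∧
  List.Chain' (fun s t => s.2.2.2 = t.1) ts ∧
  (∀ t, ts.head? = some t → t.1 = p) ∧
  (∀ t, ts.getLast? = some t → t.2.2.2 = q) ∧
  (ts = [] → p = q)

/-- The value of a run: the sum of the weights of its transitions. -/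
def runValue {α Q : Type*} (ts : List (Q × α × ℤ × Q)) : ℤ :=
  (ts.map (fun t => t.2.2.1)).sum

/-- The sum-automaton of the Set Partition reduction: states `q₀, …, q_k`, two
transitions of weights `xᵢ` and `-xᵢ` from `q_{i-1}` to `q_i`, over a one-letter
alphabet, `q₀` initial, `q_k` final, and a self-loop of weight `0` on `q_k`. -/
def partitionAut (k : ℕ) (x : Fin k → ℕ) : SumAut Unit (Fin (k + 1)) where
  start := {0}
  accept := {Fin.last k}
  step q _ z q' :=
    (∃ i : Fin k, q = i.castSucc ∧ q' = i.succ ∧ (z = (x i : ℤ) ∨ z = -(x i : ℤ))) ∨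
    (q = Fin.last k ∧ q' = Fin.last k ∧ z = 0)


lemma sum_if_split {k : ℕ} (w : Fin k → ℤ) (j : ℕ) (hj : j < k) :
    (∑ i : Fin k, if j ≤ i.val then w i else 0)
      = w ⟨j, hj⟩ + ∑ i : Fin k, if j + 1 ≤ i.val then w i else 0 := by
  have : ∀ i : Fin k, (if j ≤ i.val then w i else 0)
      = (if j + 1 ≤ i.val then w i else 0) + (if i = ⟨j, hj⟩ then w ⟨j, hj⟩ else 0) := by
    intro i
    rcases eq_or_ne i ⟨j, hj⟩ with rfl | h
    · simp
    · have : i.val ≠ j := fun hv => h (Fin.ext hv)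
      split_ifs with h1 h2 <;> omega
  rw [Finset.sum_congr rfl (fun i _ => this i), Finset.sum_add_distrib]
  simp [Finset.sum_ite_eq', add_comm]

/-- the run built from signed weights `w`, covering indices `j, j+1, …, k-1`. -/
def mkRun (k : ℕ) (w : Fin k → ℤ) : (m j : ℕ) → j + m = k →
    List (Fin (k + 1) × Unit × ℤ × Fin (k + 1))
  | 0, _, _ => []
  | m + 1, j, h =>
    (⟨j, by omega⟩, (), w ⟨j, by omega⟩, ⟨j + 1, by omega⟩) ::
      mkRun k w m (j + 1) (by omega)

lemma mkRun_isRun {k : ℕ} (x : Fin k → ℕ) (w : Fin k → ℤ)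
    (hw : ∀ i, w i = (x i : ℤ) ∨ w i = -(x i : ℤ)) :
    ∀ (m j : ℕ) (h : j + m = k),
      IsRunFrom (partitionAut k x) ⟨j, by omega⟩ (mkRun k w m j h) (Fin.last k) := by
  intro m
  induction m with
  | zero =>
    intro j h
    refine ⟨by simp [mkRun], by rw [mkRun]; exact List.isChain_nil, by simp [mkRun], by simp [mkRun], ?_⟩
    intro _
    exact Fin.ext (by simpa using h)
  | succ m ih =>
    intro j h
    obtain ⟨h1, h2, h3, h4, h5⟩ := ih (j + 1) (by omega)
    refine ⟨?_, ?_, ?_, ?_, by simp [mkRun]⟩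
    · intro t ht
      rw [mkRun] at ht
      rcases List.mem_cons.mp ht with rfl | ht
      · exact Or.inl ⟨⟨j, by omega⟩, Fin.ext rfl, Fin.ext rfl, hw _⟩
      · exact h1 t ht
    · rw [mkRun]; show List.IsChain _ _; rw [List.isChain_cons]
      refine ⟨fun b hb => (h3 b (by simpa using hb)).symm ▸ rfl, h2⟩
    · intro t ht
      rw [mkRun] at ht
      simp only [List.head?_cons, Option.some.injEq] at ht
      rw [← ht]
    · intro t ht
      rw [mkRun] at ht
      rcases List.eq_nil_or_concat (mkRun k w m (j+1) (by omega)) with hnil | ⟨l', b, hl⟩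
      · rw [hnil] at ht h5
        simp only [List.getLast?_singleton, Option.some.injEq] at ht
        rw [← ht]
        exact (h5 rfl).symm ▸ rfl
      · rw [hl] at ht h4
        have hcons : ((⟨j, by omega⟩, (), w ⟨j, by omega⟩, ⟨j + 1, by omega⟩) :: l'.concat b)
            = ((⟨j, by omega⟩, (), w ⟨j, by omega⟩, ⟨j + 1, by omega⟩) :: l').concat b := by
          simp
        rw [hcons] at ht
        simp only [List.concat_eq_append] at ht h4
        rw [List.getLast?_concat] at ht
        obtain rfl : b = t := by simpa using ht
        exact h4 b List.getLast?_concat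

lemma mkRun_value {k : ℕ} (w : Fin k → ℤ) :
    ∀ (m j : ℕ) (h : j + m = k),
      runValue (mkRun k w m j h) = ∑ i : Fin k, if j ≤ i.val then w i else 0 := by
  intro m
  induction m with
  | zero =>
    intro j h
    rw [mkRun]
    have : ∀ i : Fin k, (if j ≤ i.val then w i else 0) = 0 := by
      intro i; rw [if_neg]; omega
    simp [runValue, Finset.sum_congr rfl fun i _ => this i]
  | succ m ih =>
    intro j h
    rw [mkRun]
    have := ih (j + 1) (by omega)
    simp only [runValue, List.map_cons, List.sum_cons] at this ⊢
    rw [this, sum_if_split w j (by omega)]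

lemma loop_run_value {k : ℕ} (x : Fin k → ℕ) :
    ∀ (ts : List (Fin (k + 1) × Unit × ℤ × Fin (k + 1))) (e : Fin (k + 1)),
      IsRunFrom (partitionAut k x) (Fin.last k) ts e → runValue ts = 0 := by
  intro ts
  induction ts with
  | nil => intro e _; simp [runValue]
  | cons t ts ih =>
    intro e ⟨h1, h2, h3, h4, _⟩
    have ht1 : t.1 = Fin.last k := h3 t rfl
    rcases h1 t List.mem_cons_self with ⟨i, hi, _, _⟩ | ⟨_, hnext, hz⟩
    · exfalso
      have := i.castSucc_lt_last
      rw [← hi, ht1] at this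
      exact lt_irrefl _ this
    · have hrest : IsRunFrom (partitionAut k x) (Fin.last k) ts e := by
        refine ⟨fun u hu => h1 u (List.mem_cons_of_mem _ hu), (List.isChain_cons.mp h2).2,
          ?_, ?_, ?_⟩
        · intro u hu
          have := (List.isChain_cons.mp h2).1 u hu
          rw [← this, hnext]
        · intro u hu
          apply h4
          rcases List.eq_nil_or_concat ts with rfl | ⟨l', b, hl⟩
          · simp at hu
          · subst hl
            simp only [List.concat_eq_append] at hu ⊢
            rw [List.getLast?_concat] at hu
            rw [show (t :: (l' ++ [b])) = (t :: l') ++ [b] by simp, List.getLast?_concat]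
            exact hu
        · intro h
          subst h
          have := h4 t rfl
          rw [← hnext, this]
      have := ih e hrest
      simp only [runValue, List.map_cons, List.sum_cons] at *
      rw [hz, this, zero_add]

lemma run_decompose {k : ℕ} (x : Fin k → ℕ) :
    ∀ (ts : List (Fin (k + 1) × Unit × ℤ × Fin (k + 1))) (j : ℕ) (hj : j ≤ k),
      IsRunFrom (partitionAut k x) ⟨j, by omega⟩ ts (Fin.last k) →
      ∃ ε : Fin k → ℤ, (∀ i, ε i = (x i : ℤ) ∨ ε i = -(x i : ℤ)) ∧
        runValue ts = ∑ i : Fin k, if j ≤ i.val then ε i else 0 := by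
  intro ts
  induction ts with
  | nil =>
    intro j hj ⟨_, _, _, _, h5⟩
    have : j = k := by
      have := h5 rfl
      simpa [Fin.ext_iff, Fin.last] using this
    refine ⟨fun i => (x i : ℤ), fun i => Or.inl rfl, ?_⟩
    have h0 : ∀ i : Fin k, (if j ≤ i.val then (x i : ℤ) else 0) = 0 := by
      intro i; rw [if_neg]; omega
    have := h0
    simp [runValue, Finset.sum_congr rfl fun i _ => this i]
  | cons t ts ih =>
    intro j hj ⟨h1, h2, h3, h4, _⟩
    have ht1 : t.1 = ⟨j, by omega⟩ := h3 t rfl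
    have hrest : ∀ p, t.2.2.2 = p → IsRunFrom (partitionAut k x) p ts (Fin.last k) := by
      intro p hp
      refine ⟨fun u hu => h1 u (List.mem_cons_of_mem _ hu), (List.isChain_cons.mp h2).2,
        ?_, ?_, ?_⟩
      · intro u hu
        have := (List.isChain_cons.mp h2).1 u hu
        rw [← this, hp]
      · intro u hu
        apply h4
        rcases List.eq_nil_or_concat ts with rfl | ⟨l', b, hl⟩
        · simp at hu
        · subst hl
          simp only [List.concat_eq_append] at hu ⊢
          rw [List.getLast?_concat] at hu
          rw [show (t :: (l' ++ [b])) = (t :: l') ++ [b] by simp, List.getLast?_concat]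
          exact hu
      · intro h
        subst h
        have := h4 t rfl
        rw [← hp, this]
    rcases h1 t List.mem_cons_self with ⟨i, hi, hnext, hz⟩ | ⟨hlast, hnext, hz⟩
    · have hij : i.val = j := by
        rw [ht1] at hi
        have : j = i.val := by simpa [Fin.ext_iff] using hi
        omega
      have hjk : j < k := by omega
      obtain ⟨ε', hε', hval⟩ := ih (j + 1) (by omega)
        (hrest _ (by rw [hnext]; exact Fin.ext (by simp [hij])))
      refine ⟨Function.update ε' i t.2.2.1, ?_, ?_⟩
      · intro u
        rcases eq_or_ne u i with rfl | h
        · simpa using hz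
        · rw [Function.update_of_ne h]; exact hε' u
      · simp only [runValue, List.map_cons, List.sum_cons]
        rw [sum_if_split _ j hjk]
        have hie : i = ⟨j, hjk⟩ := Fin.ext hij
        have : ∀ u : Fin k,
            (if j + 1 ≤ u.val then Function.update ε' i t.2.2.1 u else 0)
              = (if j + 1 ≤ u.val then ε' u else 0) := by
          intro u
          rcases eq_or_ne u i with rfl | h
          · rw [if_neg (by omega), if_neg (by omega)]
          · rw [Function.update_of_ne h]
        rw [Finset.sum_congr rfl fun u _ => this u, ← hval, hie, Function.update_self]
        show t.2.2.1 + runValue ts = t.2.2.1 + runValue ts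
        rfl
    · have : j = k := by
        rw [ht1] at hlast
        simpa [Fin.ext_iff, Fin.last] using hlast
      subst this
      obtain ⟨ε, hε, hval⟩ := ih j hj (hrest _ (by rw [hnext]; exact Fin.ext rfl))
      refine ⟨ε, hε, ?_⟩
      simp only [runValue, List.map_cons, List.sum_cons] at *
      rw [hz, hval, zero_add]

/-- There is a subset `I` with `Σ_{i∈I} xᵢ = Σ_{i∉I} xᵢ` iff there are two
accepting-pattern runs of the automaton (one from the initial state to a final
state, one from a final state to a final state) with the same value, and
equivalently iff some accepting run has value `0`. -/
theorem setPartition_reduction (k : ℕ) (x : Fin k → ℕ) :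
    ((∃ I : Finset (Fin k), ∑ i ∈ I, (x i : ℤ) = ∑ i ∈ Iᶜ, (x i : ℤ)) ↔
      (∃ (π₁ π₂ : List (Fin (k + 1) × Unit × ℤ × Fin (k + 1)))
        (q₀ e₁ s₂ e₂ : Fin (k + 1)),
        q₀ ∈ (partitionAut k x).start ∧ e₁ ∈ (partitionAut k x).accept ∧
        s₂ ∈ (partitionAut k x).accept ∧ e₂ ∈ (partitionAut k x).accept ∧
        IsRunFrom (partitionAut k x) q₀ π₁ e₁ ∧
        IsRunFrom (partitionAut k x) s₂ π₂ e₂ ∧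
        runValue π₁ = runValue π₂)) ∧
    ((∃ I : Finset (Fin k), ∑ i ∈ I, (x i : ℤ) = ∑ i ∈ Iᶜ, (x i : ℤ)) ↔
      (∃ (π : List (Fin (k + 1) × Unit × ℤ × Fin (k + 1))) (q₀ e : Fin (k + 1)),
        q₀ ∈ (partitionAut k x).start ∧ e ∈ (partitionAut k x).accept ∧
        IsRunFrom (partitionAut k x) q₀ π e ∧ runValue π = 0)) := by
  have e0 : (0 : Fin (k + 1)) = ⟨0, Nat.succ_pos k⟩ := by
    exact Fin.ext (by simp)
  -- forward: from a partition, build a zero-value accepting run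
  have fwd : (∃ I : Finset (Fin k), ∑ i ∈ I, (x i : ℤ) = ∑ i ∈ Iᶜ, (x i : ℤ)) →
      ∃ π, IsRunFrom (partitionAut k x) (0 : Fin (k + 1)) π (Fin.last k) ∧
        runValue π = 0 := by
    rintro ⟨I, hI⟩
    set w : Fin k → ℤ := fun i => if i ∈ I then (x i : ℤ) else -(x i : ℤ) with hwdef
    have hw : ∀ i, w i = (x i : ℤ) ∨ w i = -(x i : ℤ) := by
      intro i
      by_cases h : i ∈ I <;> simp [hwdef, h]
    refine ⟨mkRun k w k 0 (by omega), ?_, ?_⟩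
    · rw [e0]
      exact mkRun_isRun x w hw k 0 (by omega)
    · rw [mkRun_value w k 0 (by omega)]
      have h1 : ∀ i : Fin k, (if 0 ≤ i.val then w i else 0) = w i := by
        intro i; rw [if_pos (Nat.zero_le _)]
      rw [Finset.sum_congr rfl fun i _ => h1 i, ← Finset.sum_add_sum_compl I w]
      have h2 : ∑ i ∈ I, w i = ∑ i ∈ I, (x i : ℤ) :=
        Finset.sum_congr rfl fun i hi => by simp [hwdef, hi]
      have h3 : ∑ i ∈ Iᶜ, w i = -∑ i ∈ Iᶜ, (x i : ℤ) := by
        rw [← Finset.sum_neg_distrib]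
        refine Finset.sum_congr rfl fun i hi => ?_
        have : i ∉ I := Finset.mem_compl.mp hi
        simp [hwdef, this]
      rw [h2, h3, hI, add_neg_cancel]
  -- backward: from a zero-value accepting run, extract a partition
  have bwd : ∀ π, IsRunFrom (partitionAut k x) (0 : Fin (k + 1)) π (Fin.last k) →
      runValue π = 0 →
      ∃ I : Finset (Fin k), ∑ i ∈ I, (x i : ℤ) = ∑ i ∈ Iᶜ, (x i : ℤ) := by
    intro π hrun hval
    rw [e0] at hrun
    obtain ⟨ε, hε, hsum⟩ := run_decompose x π 0 (Nat.zero_le k) hrun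
    have h1 : ∀ i : Fin k, (if 0 ≤ i.val then ε i else 0) = ε i := by
      intro i; rw [if_pos (Nat.zero_le _)]
    rw [hval, Finset.sum_congr rfl fun i _ => h1 i] at hsum
    refine ⟨Finset.univ.filter (fun i => ε i = (x i : ℤ)), ?_⟩
    set I := Finset.univ.filter (fun i => ε i = (x i : ℤ)) with hIdef
    have h2 : ∑ i ∈ I, ε i = ∑ i ∈ I, (x i : ℤ) := by
      refine Finset.sum_congr rfl fun i hi => ?_
      rw [hIdef] at hi
      exact (Finset.mem_filter.mp hi).2
    have h3 : ∑ i ∈ Iᶜ, ε i = -∑ i ∈ Iᶜ, (x i : ℤ) := by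
      rw [← Finset.sum_neg_distrib]
      refine Finset.sum_congr rfl fun i hi => ?_
      have hni : ε i ≠ (x i : ℤ) := by
        have := Finset.mem_compl.mp hi
        simpa [hIdef] using this
      rcases hε i with h | h
      · exact absurd h hni
      · exact h
    have := (Finset.sum_add_sum_compl I ε).trans hsum.symm
    rw [h2, h3] at this
    linarith
  constructor
  · constructor
    · rintro hI
      obtain ⟨π, hrun, hv⟩ := fwd hI
      refine ⟨π, [], 0, Fin.last k, Fin.last k, Fin.last k, rfl, rfl, rfl, rfl, hrun,
        ⟨by simp, List.isChain_nil, by simp, by simp, fun _ => rfl⟩, ?_⟩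
      simpa [runValue] using hv
    · rintro ⟨π₁, π₂, q₀, e₁, s₂, e₂, hq₀, he₁, hs₂, he₂, hr₁, hr₂, hvv⟩
      have hq₀' : q₀ = 0 := hq₀
      have he₁' : e₁ = Fin.last k := he₁
      have hs₂' : s₂ = Fin.last k := hs₂
      subst hq₀' he₁' hs₂'
      have h0 : runValue π₂ = 0 := loop_run_value x π₂ e₂ hr₂
      exact bwd π₁ hr₁ (hvv.trans h0)
  · constructor
    · rintro hI
      obtain ⟨π, hrun, hv⟩ := fwd hI
      exact ⟨π, 0, Fin.last k, rfl, rfl, hrun, hv⟩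
    · rintro ⟨π, q₀, e, hq₀, he, hrun, hv⟩
      have hq₀' : q₀ = 0 := hq₀
      have he' : e = Fin.last k := he
      subst hq₀' he'
      exact bwd π hrun hv
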